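/- Let μ be a finite positive Borel measure on [0,∞] such that ∫_{[0,1)} α/(1−α) dμ(α) < ∞ and ∫_{(1,∞]} α/(α−1) dμ(α) < ∞ (with the convention α/(α−1) = 1 at α = ∞). Suppose that for every d ∈ ℕ the function f_μ : (ℝ≥0)^d ∖ {0} → ℝ, f_μ(x) = ‖x‖₁ · exp₂( ∫_{[0,∞]} H_α(x/‖x‖₁) dμ(α) ), where ‖x‖₁ = ∑_i x_i, is concave. Then μ((1,∞]) = 0, μ({1}) = 0, and ∫_{[0,1)} α/(1−α) dμ(α) ≤ 1. -/

import Mathlib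

open MeasureTheory
open scoped ENNReal

noncomputable section

/-- Base-2 logarithm. -/
def log2 (x : ℝ) : ℝ := Real.logb 2 x

/-- Base-2 exponential. -/
def exp2 (x : ℝ) : ℝ := (2 : ℝ) ^ x

/-- Rényi entropy of order `α ∈ [0,∞]` of a vector `p` on a finite set. -/
def renyi {X : Type*} [Fintype X] (α : ℝ≥0∞) (p : X → ℝ) : ℝ :=
  if α = 0 then log2 (Nat.card {x : X // 0 < p x})
  else if α = 1 then -∑ x, p x * log2 (p x)
  else if α = ⊤ then -log2 (⨆ x, p x)
  else (1 - α.toReal)⁻¹ * log2 (∑ x, p x ^ α.toReal)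

/-- A probability vector on a finite set. -/
def IsProbVec {X : Type*} [Fintype X] (p : X → ℝ) : Prop :=
  (∀ x, 0 ≤ p x) ∧ ∑ x, p x = 1

/-- A doubly stochastic matrix. -/
def DoublyStochastic {X : Type*} [Fintype X] (S : Matrix X X ℝ) : Prop :=
  (∀ i j, 0 ≤ S i j) ∧ (∀ i, ∑ j, S i j = 1) ∧ (∀ j, ∑ i, S i j = 1)

/-- `Q` is obtained from `P` by a conditionally mixing channel. -/
def CondMixed {X Y Y' : Type*} [Fintype X] [Fintype Y] [Fintype Y']
    (P : Matrix X Y ℝ) (Q : Matrix X Y' ℝ) : Prop :=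
  ∃ (k : ℕ) (S : Fin k → Matrix X X ℝ) (D : Fin k → Matrix Y Y' ℝ),
    (∀ i, DoublyStochastic (S i)) ∧
    (∀ i a b, 0 ≤ D i a b) ∧
    (∀ a, ∑ b, ∑ i, D i a b = 1) ∧
    Q = ∑ i, S i * P * D i

/-- A joint probability distribution on finite alphabets, viewed as a matrix. -/
def IsJointProb {X Y : Type*} [Fintype X] [Fintype Y] (P : Matrix X Y ℝ) : Prop :=
  (∀ x y, 0 ≤ P x y) ∧ ∑ x, ∑ y, P x y = 1

/-- Marginal on the conditioning system: the `y`-th column sum. -/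
def margY {X Y : Type*} [Fintype X] (P : Matrix X Y ℝ) (y : Y) : ℝ := ∑ x, P x y

/-- The conditioned distribution (normalized `y`-th column). -/
def condX {X Y : Type*} [Fintype X] (P : Matrix X Y ℝ) (y : Y) : X → ℝ :=
  fun x => P x y / margY P y

/-- The conditional entropy `H_{t,τ}`. -/
def Hbulk {X Y : Type*} [Fintype X] [Fintype Y] (t : ℝ) (τ : Measure ℝ≥0∞)
    (P : Matrix X Y ℝ) : ℝ :=
  t⁻¹ * log2 (∑ y ∈ Finset.univ.filter (fun y => 0 < margY P y),
    margY P y * exp2 (t * ∫ α, renyi α (condX P y) ∂τ))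

/-- The conditional entropy `H_{0,α}`. -/
def HzeroA {X Y : Type*} [Fintype X] [Fintype Y] (α : ℝ≥0∞) (P : Matrix X Y ℝ) : ℝ :=
  ∑ y ∈ Finset.univ.filter (fun y => 0 < margY P y), margY P y * renyi α (condX P y)

/-- The conditional entropy `H_{-∞,τ}`. -/
def HnegInf {X Y : Type*} [Fintype X] [Fintype Y] (τ : Measure ℝ≥0∞)
    (P : Matrix X Y ℝ) : ℝ :=
  sInf ((fun y => ∫ α, renyi α (condX P y) ∂τ) '' {y | 0 < margY P y})

/-- The conditional entropy `H_{+∞,0}`. -/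
def HposInf {X Y : Type*} [Fintype X] [Fintype Y] (P : Matrix X Y ℝ) : ℝ :=
  sSup ((fun y => renyi 0 (condX P y)) '' {y | 0 < margY P y})

/-- The parameter set `𝒟_bulk`. -/
def Dbulk : Set (ℝ × Measure ℝ≥0∞) :=
  {p | p.1 ≠ 0 ∧ IsProbabilityMeasure p.2 ∧
    ∀ (d n n' : ℕ) (P : Matrix (Fin d) (Fin n) ℝ) (Q : Matrix (Fin d) (Fin n') ℝ),
      IsJointProb P → CondMixed P Q → Hbulk p.1 p.2 P ≤ Hbulk p.1 p.2 Q}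

/-- The parameter set `𝒟_{-∞}`. -/
def DnegInf : Set (Measure ℝ≥0∞) :=
  {τ | IsProbabilityMeasure τ ∧
    ∀ (d n n' : ℕ) (P : Matrix (Fin d) (Fin n) ℝ) (Q : Matrix (Fin d) (Fin n') ℝ),
      IsJointProb P → CondMixed P Q → HnegInf τ P ≤ HnegInf τ Q}

/-- `P'` is obtained from `P` by relabeling (injections) and embedding, with zeros elsewhere. -/
def Embeds {X Y X' Y' : Type*} [Fintype X] [Fintype Y] [Fintype X'] [Fintype Y']
    (P : Matrix X Y ℝ) (P' : Matrix X' Y' ℝ) : Prop :=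
  ∃ (f : X ↪ X') (g : Y ↪ Y'),
    (∀ x y, P' (f x) (g y) = P x y) ∧
    (∀ x' y', P' x' y' ≠ 0 → (∃ x, f x = x') ∧ (∃ y, g y = y'))

/-- Conditional majorization: after a common embedding, a conditionally mixing channel maps
(the embedding of) `P` to (the embedding of) `Q`. -/
def CondMajorizes {X Y X' Y' : Type*} [Fintype X] [Fintype Y] [Fintype X'] [Fintype Y']
    (P : Matrix X Y ℝ) (Q : Matrix X' Y' ℝ) : Prop :=
  ∃ (m n n' : ℕ) (P' : Matrix (Fin m) (Fin n) ℝ) (Q' : Matrix (Fin m) (Fin n') ℝ),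
    Embeds P P' ∧ Embeds Q Q' ∧ CondMixed P' Q'

/-- Kronecker product of matrices. -/
def kron {X Y X' Y' : Type*} (P : Matrix X Y ℝ) (Q : Matrix X' Y' ℝ) :
    Matrix (X × X') (Y × Y') ℝ :=
  Matrix.of fun x y => P x.1 y.1 * Q x.2 y.2

/-- `n`-fold Kronecker power of a matrix. -/
def kronPow {X Y : Type*} (P : Matrix X Y ℝ) (n : ℕ) :
    Matrix (Fin n → X) (Fin n → Y) ℝ :=
  Matrix.of fun x y => ∏ i, P (x i) (y i)

/-- Sum of all entries of a matrix. -/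
def totalMass {X Y : Type*} [Fintype X] [Fintype Y] (P : Matrix X Y ℝ) : ℝ :=
  ∑ x, ∑ y, P x y

/-- `α/(1-α)`, with the convention that it equals `-1` at `α = ∞`. -/
def aRatio (α : ℝ≥0∞) : ℝ := if α = ⊤ then -1 else α.toReal / (1 - α.toReal)

/-- `α/(α-1)`, with the convention that it equals `1` at `α = ∞`. -/
def aRatio' (α : ℝ≥0∞) : ℝ := if α = ⊤ then 1 else α.toReal / (α.toReal - 1)

/-- Rényi relative entropy `D_α(p‖r)`. -/
def relRenyi {X : Type*} [Fintype X] (α : ℝ≥0∞) (p r : X → ℝ) : ℝ :=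
  if α = 1 then ∑ x, p x * log2 (p x / r x)
  else if α = ⊤ then log2 (⨆ x, p x / r x)
  else (α.toReal - 1)⁻¹ * log2 (∑ x, p x ^ α.toReal * r x ^ (1 - α.toReal))

/-- The quantity `I_{t,τ}(P‖R)`. -/
def Ibulk {X Y : Type*} [Fintype X] [Fintype Y] (t : ℝ) (τ : Measure ℝ≥0∞)
    (P : Matrix X Y ℝ) (R : X → ℝ) : ℝ :=
  -t⁻¹ * log2 (∑ y ∈ Finset.univ.filter (fun y => 0 < margY P y),
    margY P y * exp2 (-t * ∫ α, relRenyi α (condX P y) R ∂τ))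

/-- The quantity `I_{-∞,τ}(P‖R)`. -/
def InegInf {X Y : Type*} [Fintype X] [Fintype Y] (τ : Measure ℝ≥0∞)
    (P : Matrix X Y ℝ) (R : X → ℝ) : ℝ :=
  sSup ((fun y => ∫ α, relRenyi α (condX P y) R ∂τ) '' {y | 0 < margY P y})

/-- A conditioned `R`-preserving channel maps `P` to `Q`. -/
def CondPreserving {X Y Y' : Type*} [Fintype X] [Fintype Y] [Fintype Y'] (R : X → ℝ)
    (P : Matrix X Y ℝ) (Q : Matrix X Y' ℝ) : Prop :=
  ∃ (k : ℕ) (G : Fin k → Matrix X X ℝ) (D : Fin k → Matrix Y Y' ℝ),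
    (∀ i a b, 0 ≤ G i a b) ∧
    (∀ i b, ∑ a, G i a b = 1) ∧
    (∀ i, (G i).mulVec R = R) ∧
    (∀ i a b, 0 ≤ D i a b) ∧
    (∀ a, ∑ b, ∑ i, D i a b = 1) ∧
    Q = ∑ i, G i * P * D i

/-- Total variation distance between two matrices. -/
def tvDist {X Y : Type*} [Fintype X] [Fintype Y] (P Q : Matrix X Y ℝ) : ℝ :=
  (1 / 2) * ∑ x, ∑ y, |P x y - Q x y|

-- test vectors
def uvec (N : ℕ) : Fin (N+1) → ℝ := fun i => if i = 0 then 1 else 0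
def vvec (N : ℕ) : Fin (N+1) → ℝ := fun i => if i = 0 then 0 else 1/(N:ℝ)
def wvec (N : ℕ) : Fin (N+1) → ℝ := fun i => if i = 0 then 1/2 else 1/(2*(N:ℝ))
def eN (N : ℕ) (α : ℝ≥0∞) : ℝ := (1 - α.toReal)⁻¹ * log2 (1 + (N:ℝ) ^ (α.toReal - 1))

lemma sum_ite_fin (N : ℕ) (c d : ℝ) :
    ∑ i : Fin (N+1), (if i = 0 then c else d) = c + N * d := by
  rw [Fin.sum_univ_succ]
  simp [Fin.succ_ne_zero, Finset.sum_const, mul_comm]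

lemma sum_uvec (N : ℕ) : ∑ i, uvec N i = 1 := by
  simp [uvec, sum_ite_fin]

lemma sum_vvec (N : ℕ) (hN : 1 ≤ N) : ∑ i, vvec N i = 1 := by
  have : (N:ℝ) ≠ 0 := Nat.cast_ne_zero.mpr (by omega)
  simp only [vvec]; rw [sum_ite_fin]; field_simp; norm_num

lemma sum_wvec (N : ℕ) (hN : 1 ≤ N) : ∑ i, wvec N i = 1 := by
  have : (N:ℝ) ≠ 0 := Nat.cast_ne_zero.mpr (by omega)
  simp only [wvec]; rw [sum_ite_fin]; field_simp; ring

lemma log2_one : log2 1 = 0 := by simp [log2]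
lemma log2_two : log2 2 = 1 := by simp [log2]

lemma renyi_uvec (N : ℕ) (α : ℝ≥0∞) : renyi α (uvec N) = 0 := by
  rcases eq_or_ne α 0 with rfl | h0
  · rw [renyi, if_pos rfl]
    have : Nat.card {x : Fin (N+1) // 0 < uvec N x} = 1 := by
      have he : ∀ x : Fin (N+1), 0 < uvec N x ↔ x = 0 := by
        intro x; unfold uvec; split <;> simp_all
      rw [Nat.card_congr (Equiv.subtypeEquivRight he), Nat.card_eq_fintype_card,
        Fintype.card_subtype_eq]
    rw [this]; simpa using log2_one
  rcases eq_or_ne α 1 with rfl | h1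
  · rw [renyi, if_neg h0, if_pos rfl]
    have : ∀ i : Fin (N+1), uvec N i * log2 (uvec N i) = 0 := by
      intro i; unfold uvec; split <;> simp [log2_one, log2]
    simp [this]
  rcases eq_or_ne α ⊤ with rfl | ht
  · rw [renyi, if_neg h0, if_neg (by simp : (⊤:ℝ≥0∞) ≠ 1), if_pos rfl]
    have hsup : (⨆ x, uvec N x) = 1 := by
      apply le_antisymm
      · apply ciSup_le; intro i; unfold uvec; split <;> norm_num
      · have := le_ciSup (Finite.bddAbove_range (uvec N)) (0 : Fin (N+1))
        exact (by simp [uvec] : (1:ℝ) ≤ uvec N 0).trans this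
    rw [hsup, log2_one, neg_zero]
  · rw [renyi, if_neg h0, if_neg h1, if_neg ht]
    have ha : 0 < α.toReal := ENNReal.toReal_pos h0 ht
    have : ∀ i : Fin (N+1), uvec N i ^ α.toReal = if i = 0 then 1 else 0 := by
      intro i; unfold uvec; split
      · exact Real.one_rpow _
      · exact Real.zero_rpow (ne_of_gt ha)
    rw [Finset.sum_congr rfl (fun i _ => this i), sum_ite_fin]
    simp [log2_one]

-- chunk 2: renyi values for vvec, wvec
lemma log2_half : log2 (1/2) = -1 := by
  rw [log2, one_div, Real.logb_inv, Real.logb_self_eq_one one_lt_two]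

lemma renyi_vvec (N : ℕ) (hN : 1 ≤ N) (α : ℝ≥0∞) : renyi α (vvec N) = log2 N := by
  have hN0 : (N:ℝ) ≠ 0 := Nat.cast_ne_zero.mpr (by omega)
  have hNpos : (0:ℝ) < N := by positivity
  rcases eq_or_ne α 0 with rfl | h0
  · rw [renyi, if_pos rfl]
    have he : ∀ x : Fin (N+1), 0 < vvec N x ↔ ¬ (x = 0) := by
      intro x; unfold vvec; split <;> simp_all <;> positivity
    have : Nat.card {x : Fin (N+1) // 0 < vvec N x} = N := by
      rw [Nat.card_congr (Equiv.subtypeEquivRight he), Nat.card_eq_fintype_card,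
        Fintype.card_subtype_compl, Fintype.card_subtype_eq, Fintype.card_fin]
      omega
    rw [this]
  rcases eq_or_ne α 1 with rfl | h1
  · rw [renyi, if_neg h0, if_pos rfl]
    have : ∀ i : Fin (N+1), vvec N i * log2 (vvec N i)
        = if i = 0 then 0 else (1/(N:ℝ)) * log2 (1/(N:ℝ)) := by
      intro i; unfold vvec; split <;> simp
    rw [Finset.sum_congr rfl (fun i _ => this i), sum_ite_fin]
    rw [log2, one_div, Real.logb_inv]
    field_simp [log2]
    simp [log2]
  rcases eq_or_ne α ⊤ with rfl | ht
  · rw [renyi, if_neg h0, if_neg (by simp : (⊤:ℝ≥0∞) ≠ 1), if_pos rfl]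
    have hsup : (⨆ x, vvec N x) = 1/(N:ℝ) := by
      apply le_antisymm
      · apply ciSup_le; intro i; unfold vvec; split
        · positivity
        · exact le_refl _
      · have hne : (⟨1, by omega⟩ : Fin (N+1)) ≠ 0 := by
          intro h; simpa using congrArg Fin.val h
        have hval : vvec N ⟨1, by omega⟩ = 1/(N:ℝ) := by simp [vvec, hne]
        rw [← hval]
        exact le_ciSup (Finite.bddAbove_range (vvec N)) _
    rw [hsup, log2, one_div, Real.logb_inv]
    simp [log2]
  · rw [renyi, if_neg h0, if_neg h1, if_neg ht]
    have ha : 0 < α.toReal := ENNReal.toReal_pos h0 ht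
    have ha1 : α.toReal ≠ 1 := fun h => h1 ((ENNReal.toReal_eq_one_iff α).mp h)
    set a := α.toReal with hadef
    have key : ∀ i : Fin (N+1), vvec N i ^ a = if i = 0 then 0 else (1/(N:ℝ)) ^ a := by
      intro i; unfold vvec; split
      · exact Real.zero_rpow (ne_of_gt ha)
      · rfl
    rw [Finset.sum_congr rfl (fun i _ => key i), sum_ite_fin]
    have : (0:ℝ) + N * (1/(N:ℝ)) ^ a = (N:ℝ) ^ (1 - a) := by
      rw [one_div, Real.inv_rpow hNpos.le, Real.rpow_sub hNpos, Real.rpow_one]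
      field_simp
      simp
    rw [this, log2, Real.logb, Real.log_rpow hNpos]
    have h1a : (1:ℝ) - a ≠ 0 := by
      intro h; apply ha1; linarith [sub_eq_zero.mp h]
    rw [log2, Real.logb]
    field_simp
    try ring

-- chunk 3: wvec lemmas
lemma sum_rpow_wvec (N : ℕ) (hN : 1 ≤ N) (a : ℝ) :
    ∑ i, wvec N i ^ a = (2:ℝ)^(-a) * (1 + (N:ℝ)^(1-a)) := by
  have hNpos : (0:ℝ) < N := by positivity
  have key : ∀ i : Fin (N+1), wvec N i ^ a
      = if i = 0 then ((1:ℝ)/2) ^ a else ((1:ℝ)/(2*N)) ^ a := by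
    intro i; unfold wvec; split <;> rfl
  rw [Finset.sum_congr rfl (fun i _ => key i), sum_ite_fin]
  have e1 : ((1:ℝ)/2)^a = (2:ℝ)^(-a) := by
    rw [one_div, Real.inv_rpow (by norm_num : (0:ℝ) ≤ 2), ← Real.rpow_neg (by norm_num)]
  have e2 : ((1:ℝ)/(2*(N:ℝ)))^a = (2:ℝ)^(-a) * (N:ℝ)^(-a) := by
    rw [one_div, mul_inv, Real.mul_rpow (by positivity) (by positivity),
      Real.inv_rpow (by norm_num : (0:ℝ) ≤ 2), Real.inv_rpow hNpos.le,
      ← Real.rpow_neg (by norm_num), ← Real.rpow_neg hNpos.le]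
  have e3 : (N:ℝ)^(1-a) = N * (N:ℝ)^(-a) := by
    rw [show (1:ℝ)-a = 1 + -a by ring, Real.rpow_add hNpos, Real.rpow_one]
  rw [e1, e2, e3]; ring

lemma renyi_wvec_one (N : ℕ) (hN : 1 ≤ N) : renyi 1 (wvec N) = 1 + log2 N / 2 := by
  have hN0 : (N:ℝ) ≠ 0 := Nat.cast_ne_zero.mpr (by omega)
  rw [renyi, if_neg (by simp : (1:ℝ≥0∞) ≠ 0), if_pos rfl]
  have key : ∀ i : Fin (N+1), wvec N i * log2 (wvec N i)
      = if i = 0 then (1/2) * log2 (1/2) else (1/(2*(N:ℝ))) * log2 (1/(2*(N:ℝ))) := by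
    intro i; unfold wvec; split <;> rfl
  rw [Finset.sum_congr rfl (fun i _ => key i), sum_ite_fin, log2_half]
  have hlog : log2 (1/(2*(N:ℝ))) = -(1 + log2 N) := by
    rw [log2, one_div, Real.logb_inv, Real.logb_mul (by norm_num) hN0,
      Real.logb_self_eq_one one_lt_two, log2]
  rw [hlog]
  field_simp
  ring

-- chunk 4
lemma log2_sum_rpow_wvec (N : ℕ) (hN : 1 ≤ N) (a : ℝ) :
    log2 (∑ i, wvec N i ^ a) = -a + log2 (1 + (N:ℝ)^(1-a)) := by
  have hNpos : (0:ℝ) < N := by positivity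
  have hX : (0:ℝ) < 1 + (N:ℝ)^(1-a) := by positivity
  rw [sum_rpow_wvec N hN a, log2, Real.logb_mul (by positivity) (ne_of_gt hX),
    Real.logb_rpow (by norm_num : (0:ℝ) < 2) (by norm_num), log2]

lemma renyi_wvec_lt (N : ℕ) (hN : 1 ≤ N) {α : ℝ≥0∞} (hα : α < 1) :
    renyi α (wvec N) = log2 N - aRatio α + eN N α := by
  have hN0 : (N:ℝ) ≠ 0 := Nat.cast_ne_zero.mpr (by omega)
  have hNpos : (0:ℝ) < N := by positivity
  have ht : α ≠ ⊤ := (hα.trans_le le_top).ne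
  have ha1 : α.toReal < 1 := by
    have := ENNReal.toReal_strict_mono (by simp : (1:ℝ≥0∞) ≠ ⊤) hα
    simpa using this
  have hra : aRatio α = α.toReal / (1 - α.toReal) := if_neg ht
  rcases eq_or_ne α 0 with rfl | h0
  · rw [renyi, if_pos rfl]
    have he : ∀ x : Fin (N+1), 0 < wvec N x := by
      intro x; unfold wvec; split <;> positivity
    have hcard : Nat.card {x : Fin (N+1) // 0 < wvec N x} = N + 1 := by
      rw [Nat.card_congr (Equiv.subtypeUnivEquiv he), Nat.card_eq_fintype_card,
        Fintype.card_fin]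
    rw [hcard]
    have h1 : aRatio 0 = 0 := by rw [hra]; simp
    have h2 : eN N 0 = log2 (1 + ((N:ℝ))⁻¹) := by
      rw [eN]; simp [Real.rpow_neg_one]
    rw [h1, h2]
    have hmul : ((N:ℝ)+1) = (N:ℝ) * (1 + (N:ℝ)⁻¹) := by field_simp
    rw [sub_zero]
    unfold log2
    push_cast
    rw [hmul, Real.logb_mul hN0 (by positivity)]
  · rw [renyi, if_neg h0, if_neg (ne_of_lt hα), if_neg ht, log2_sum_rpow_wvec N hN]
    set a := α.toReal with hadef
    have h1a : (1:ℝ) - a ≠ 0 := by intro h; linarith [sub_eq_zero.mp h]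
    have hsplit : (1:ℝ) + (N:ℝ)^(1-a) = (N:ℝ)^(1-a) * ((N:ℝ)^(a-1) + 1) := by
      have : (N:ℝ)^(1-a) * (N:ℝ)^(a-1) = 1 := by
        rw [← Real.rpow_add hNpos]; norm_num
      rw [mul_add, this, mul_one, add_comm]
    rw [hsplit, log2, Real.logb_mul (by positivity) (by positivity),
      Real.logb_rpow_eq_mul_logb_of_pos hNpos]
    rw [hra, eN, ← hadef]
    rw [show (1:ℝ) + (N:ℝ)^(a-1) = (N:ℝ)^(a-1) + 1 by ring]
    unfold log2
    field_simp
    ring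

lemma renyi_wvec_gt (N : ℕ) (hN : 1 ≤ N) {α : ℝ≥0∞} (hα : 1 < α) :
    0 ≤ renyi α (wvec N) ∧ renyi α (wvec N) ≤ aRatio' α := by
  have hN0 : (N:ℝ) ≠ 0 := Nat.cast_ne_zero.mpr (by omega)
  have hNpos : (0:ℝ) < N := by positivity
  have hN1 : (1:ℝ) ≤ N := by exact_mod_cast hN
  rcases eq_or_ne α ⊤ with rfl | ht
  · rw [renyi, if_neg (by simp), if_neg (by simp), if_pos rfl]
    have hsup : (⨆ x, wvec N x) = 1/2 := by
      apply le_antisymm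
      · apply ciSup_le; intro i; unfold wvec; split
        · exact le_refl _
        · rw [div_le_div_iff₀ (by positivity) (by norm_num)]; nlinarith
      · have hval : wvec N 0 = 1/2 := by simp [wvec]
        rw [← hval]
        exact le_ciSup (Finite.bddAbove_range (wvec N)) _
    rw [hsup, log2_half, aRatio', if_pos rfl]
    norm_num
  · have ha : 1 < α.toReal := by
      have := ENNReal.toReal_strict_mono ht hα
      simpa using this
    rw [renyi, if_neg (by rintro rfl; simp at hα), if_neg (ne_of_gt hα), if_neg ht,
      log2_sum_rpow_wvec N hN]
    set a := α.toReal with hadef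
    set z := log2 (1 + (N:ℝ)^(1-a)) with hzdef
    have hz0 : 0 ≤ z :=
      Real.logb_nonneg one_lt_two (by nlinarith [Real.rpow_pos_of_pos hNpos (1-a)])
    have hz1 : z ≤ 1 := by
      have hle : (N:ℝ)^(1-a) ≤ 1 :=
        Real.rpow_le_one_of_one_le_of_nonpos hN1 (by linarith)
      have : log2 (1 + (N:ℝ)^(1-a)) ≤ log2 2 := by
        unfold log2
        exact Real.logb_le_logb_of_le one_lt_two (by positivity) (by linarith)
      simpa [log2_two] using this
    have h1a : (1:ℝ) - a ≠ 0 := by linarith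
    have hv : (1 - a)⁻¹ * (-a + z) = (a - z)/(a - 1) := by
      rw [eq_div_iff (by linarith : a - 1 ≠ 0)]
      field_simp
      ring
    rw [hv, aRatio', if_neg ht]
    constructor
    · apply div_nonneg <;> linarith
    · rw [div_le_div_iff₀ (by linarith) (by linarith)]
      nlinarith

-- chunk 5
lemma renyi_measurable {X : Type*} [Fintype X] (p : X → ℝ) (hp : ∀ x, 0 < p x) :
    Measurable (fun α : ℝ≥0∞ => renyi α p) := by
  unfold renyi
  have hmain : Measurable (fun α : ℝ≥0∞ => (1 - α.toReal)⁻¹ * log2 (∑ x, p x ^ α.toReal)) := by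
    apply Measurable.mul
    · exact ((measurable_const.sub ENNReal.measurable_toReal).inv)
    · simp only [log2, Real.logb]
      have hs : Measurable (fun α : ℝ≥0∞ => ∑ x, p x ^ α.toReal) := by
        apply Finset.measurable_sum
        intro x _
        have hc : Continuous fun r : ℝ => p x ^ r :=
          continuous_iff_continuousAt.mpr
            (fun b => Real.continuousAt_const_rpow (ne_of_gt (hp x)))
        exact hc.measurable.comp ENNReal.measurable_toReal
      exact (Real.measurable_log.comp hs).div_const _
  refine Measurable.ite (measurableSet_eq) measurable_const ?_
  refine Measurable.ite (measurableSet_eq) measurable_const ?_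
  exact Measurable.ite (measurableSet_eq) measurable_const hmain

lemma exp2_pos (x : ℝ) : 0 < exp2 x := Real.rpow_pos_of_pos two_pos x

lemma key_ineq (μ : Measure ℝ≥0∞)
    (hconc : ∀ d : ℕ, ConcaveOn ℝ {x : Fin d → ℝ | (∀ i, 0 ≤ x i) ∧ x ≠ 0}
      (fun x => (∑ i, x i) * exp2 (∫ α, renyi α (fun i => x i / ∑ j, x j) ∂μ)))
    (N : ℕ) (hN : 1 ≤ N) :
    (μ Set.univ).toReal * log2 N - 1 ≤ ∫ α, renyi α (wvec N) ∂μ := by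
  have hNpos : (0:ℝ) < N := by positivity
  have hu_mem : uvec N ∈ {x : Fin (N+1) → ℝ | (∀ i, 0 ≤ x i) ∧ x ≠ 0} := by
    constructor
    · intro i; unfold uvec; split <;> norm_num
    · intro h; have := congrFun h 0; simp [uvec] at this
  have hv_mem : vvec N ∈ {x : Fin (N+1) → ℝ | (∀ i, 0 ≤ x i) ∧ x ≠ 0} := by
    constructor
    · intro i; unfold vvec; split <;> positivity
    · intro h
      have hne : (⟨1, by omega⟩ : Fin (N+1)) ≠ 0 := by
        intro h'; simpa using congrArg Fin.val h'
      have := congrFun h ⟨1, by omega⟩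
      simp [vvec, hne] at this
      norm_cast at this
      omega
  have hc := (hconc (N+1)).2 hu_mem hv_mem (le_of_lt one_half_pos) (le_of_lt one_half_pos)
    (by norm_num)
  have hcomb : ((1:ℝ)/2) • uvec N + ((1:ℝ)/2) • vvec N = wvec N := by
    funext i
    simp only [Pi.add_apply, Pi.smul_apply, smul_eq_mul, uvec, vvec, wvec]
    split <;> ring
  rw [hcomb] at hc
  simp only [smul_eq_mul] at hc
  -- evaluate f(u)
  have hu_norm : (fun i => uvec N i / ∑ j, uvec N j) = uvec N := by
    rw [sum_uvec]; funext i; rw [div_one]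
  have hu_int : (∫ α, renyi α (uvec N) ∂μ) = 0 := by
    simp [renyi_uvec]
  have hu_val : (∑ i, uvec N i) * exp2 (∫ α, renyi α (fun i => uvec N i / ∑ j, uvec N j) ∂μ) = 1 := by
    rw [hu_norm, hu_int, sum_uvec]
    simp [exp2]
  -- evaluate f(v)
  have hv_norm : (fun i => vvec N i / ∑ j, vvec N j) = vvec N := by
    rw [sum_vvec N hN]; funext i; rw [div_one]
  have hv_val : (∑ i, vvec N i) * exp2 (∫ α, renyi α (fun i => vvec N i / ∑ j, vvec N j) ∂μ)
      = exp2 ((μ Set.univ).toReal * log2 N) := by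
    rw [hv_norm, sum_vvec N hN, one_mul]
    congr 1
    rw [show (fun α => renyi α (vvec N)) = fun _ => log2 (N:ℝ) from funext fun α => renyi_vvec N hN α]
    rw [integral_const, smul_eq_mul]
    rfl
  -- evaluate f(w)
  have hw_norm : (fun i => wvec N i / ∑ j, wvec N j) = wvec N := by
    rw [sum_wvec N hN]; funext i; rw [div_one]
  rw [hu_val, hv_val, hw_norm, sum_wvec N hN, one_mul] at hc
  set m := (μ Set.univ).toReal
  set I := ∫ α, renyi α (wvec N) ∂μ
  have h2 : exp2 (m * log2 N - 1) ≤ exp2 I := by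
    calc exp2 (m * log2 N - 1) = (1/2) * exp2 (m * log2 N) := by
          unfold exp2
          rw [Real.rpow_sub two_pos, Real.rpow_one]
          ring
      _ ≤ 1/2 * 1 + 1/2 * exp2 (m * log2 N) := by nlinarith
      _ ≤ exp2 I := hc
  unfold exp2 at h2
  exact (Real.rpow_le_rpow_left_iff one_lt_two).mp h2

-- chunk 6 : eN bounds and measurability
lemma toReal_lt_one {α : ℝ≥0∞} (hα : α < 1) : α.toReal < 1 := by
  have := ENNReal.toReal_strict_mono (by simp : (1:ℝ≥0∞) ≠ ⊤) hα
  simpa using this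

lemma aRatio_eq {α : ℝ≥0∞} (hα : α < 1) : aRatio α = α.toReal / (1 - α.toReal) :=
  if_neg (hα.trans_le le_top).ne

lemma aRatio_nonneg_of_lt {α : ℝ≥0∞} (hα : α < 1) : 0 ≤ aRatio α := by
  rw [aRatio_eq hα]
  have := toReal_lt_one hα
  exact div_nonneg ENNReal.toReal_nonneg (by linarith)

lemma aRatio'_nonneg_of_gt {α : ℝ≥0∞} (hα : 1 < α) : 0 ≤ aRatio' α := by
  unfold aRatio'
  split
  · norm_num
  · have ha : 1 < α.toReal := by
      have := ENNReal.toReal_strict_mono (by assumption) hα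
      simpa using this
    exact div_nonneg (by linarith) (by linarith)

lemma eN_nonneg {N : ℕ} {α : ℝ≥0∞} (hα : α < 1) : 0 ≤ eN N α := by
  unfold eN
  have ha := toReal_lt_one hα
  apply mul_nonneg
  · rw [inv_nonneg]; linarith
  · exact Real.logb_nonneg one_lt_two
      (by nlinarith [Real.rpow_nonneg (Nat.cast_nonneg N : (0:ℝ) ≤ N) (α.toReal - 1)])

lemma eN_le {N : ℕ} (hN : 1 ≤ N) {α : ℝ≥0∞} (hα : α < 1) : eN N α ≤ 1 + aRatio α := by
  have ha := toReal_lt_one hα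
  have hN1 : (1:ℝ) ≤ N := by exact_mod_cast hN
  have h1a : (0:ℝ) < 1 - α.toReal := by linarith
  have hle : (N:ℝ)^(α.toReal - 1) ≤ 1 :=
    Real.rpow_le_one_of_one_le_of_nonpos hN1 (by linarith)
  have hz : log2 (1 + (N:ℝ)^(α.toReal - 1)) ≤ 1 := by
    have : log2 (1 + (N:ℝ)^(α.toReal - 1)) ≤ log2 2 := by
      unfold log2
      exact Real.logb_le_logb_of_le one_lt_two
        (by nlinarith [Real.rpow_pos_of_pos (by linarith : (0:ℝ) < N) (α.toReal - 1)])
        (by linarith)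
    simpa [log2_two] using this
  have hid : 1 + aRatio α = (1 - α.toReal)⁻¹ := by
    rw [aRatio_eq hα]
    field_simp
    ring
  rw [hid, eN]
  calc (1 - α.toReal)⁻¹ * log2 (1 + (N:ℝ)^(α.toReal - 1))
      ≤ (1 - α.toReal)⁻¹ * 1 := by
        apply mul_le_mul_of_nonneg_left hz
        rw [inv_nonneg]; linarith
    _ = (1 - α.toReal)⁻¹ := mul_one _

lemma eN_measurable (N : ℕ) (hN : 1 ≤ N) : Measurable (eN N) := by
  unfold eN
  have hN0 : (N:ℝ) ≠ 0 := Nat.cast_ne_zero.mpr (by omega)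
  apply Measurable.mul
  · exact (measurable_const.sub ENNReal.measurable_toReal).inv
  · have hc : Continuous fun r : ℝ => (N:ℝ) ^ r :=
      continuous_iff_continuousAt.mpr (fun b => Real.continuousAt_const_rpow hN0)
    have hinner : Measurable fun α : ℝ≥0∞ => 1 + (N:ℝ) ^ (α.toReal - 1) :=
      measurable_const.add
        ((hc.measurable).comp (ENNReal.measurable_toReal.sub measurable_const))
    simp only [log2, Real.logb]
    exact (Real.measurable_log.comp hinner).div_const _

-- chunk 7: integral bound lemma
lemma wvec_pos (N : ℕ) (hN : 1 ≤ N) : ∀ x, 0 < wvec N x := by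
  intro x; unfold wvec
  have : (0:ℝ) < N := by positivity
  split <;> positivity

lemma integrableOn_eN (μ : Measure ℝ≥0∞) [IsFiniteMeasure μ]
    (h1 : IntegrableOn aRatio (Set.Iio 1) μ) (N : ℕ) (hN : 1 ≤ N) :
    IntegrableOn (eN N) (Set.Iio 1) μ := by
  have hb : Integrable (fun α => 1 + aRatio α) (μ.restrict (Set.Iio 1)) :=
    (integrable_const _).add h1
  apply Integrable.mono hb ((eN_measurable N hN).aestronglyMeasurable)
  rw [ae_restrict_iff' measurableSet_Iio]
  apply ae_of_all
  intro α hα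
  have h0 := eN_nonneg (N := N) hα
  have hle := eN_le hN hα
  have hr := aRatio_nonneg_of_lt hα
  rw [Real.norm_eq_abs, Real.norm_eq_abs, abs_of_nonneg h0]
  rw [abs_of_nonneg (by linarith : (0:ℝ) ≤ 1 + aRatio α)]
  exact hle

lemma integral_renyi_wvec_le (μ : Measure ℝ≥0∞) [IsFiniteMeasure μ]
    (h1 : IntegrableOn aRatio (Set.Iio 1) μ)
    (h2 : IntegrableOn aRatio' (Set.Ioi 1) μ)
    (N : ℕ) (hN : 1 ≤ N) :
    ∫ α, renyi α (wvec N) ∂μ ≤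
      ((μ (Set.Iio 1)).toReal * log2 N - (∫ α in Set.Iio 1, aRatio α ∂μ)
        + (∫ α in Set.Iio 1, eN N α ∂μ))
      + (μ {1}).toReal * (1 + log2 N / 2)
      + (∫ α in Set.Ioi 1, aRatio' α ∂μ) := by
  set g : ℝ≥0∞ → ℝ := fun α => renyi α (wvec N) with hg
  have hgm : Measurable g := renyi_measurable (wvec N) (wvec_pos N hN)
  have heqIio : Set.EqOn g (fun α => log2 N - aRatio α + eN N α) (Set.Iio 1) :=
    fun α hα => renyi_wvec_lt N hN hα
  have hInt_eN : IntegrableOn (eN N) (Set.Iio 1) μ := integrableOn_eN μ h1 N hN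
  have hrhsInt : IntegrableOn (fun α => log2 N - aRatio α + eN N α) (Set.Iio 1) μ :=
    ((integrable_const _).sub h1).add hInt_eN
  have hIntIio : IntegrableOn g (Set.Iio 1) μ :=
    hrhsInt.congr_fun heqIio.symm measurableSet_Iio
  have hIio_eq : ∫ α in Set.Iio 1, g α ∂μ
      = (μ (Set.Iio 1)).toReal * log2 N - (∫ α in Set.Iio 1, aRatio α ∂μ)
        + (∫ α in Set.Iio 1, eN N α ∂μ) := by
    have hfc : Integrable (fun _ : ℝ≥0∞ => log2 (N:ℝ)) (μ.restrict (Set.Iio 1)) :=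
      integrable_const _
    have hfa : Integrable (fun α => log2 (N:ℝ) - aRatio α) (μ.restrict (Set.Iio 1)) :=
      hfc.sub h1
    rw [setIntegral_congr_fun measurableSet_Iio heqIio, integral_add hfa hInt_eN,
      integral_sub hfc h1, setIntegral_const, smul_eq_mul]
    rfl
  have hIntSingle : IntegrableOn g {1} μ :=
    (integrableOn_singleton_iff).mpr (Or.inr (measure_lt_top μ _))
  have hSingle_eq : ∫ α in {1}, g α ∂μ = (μ {1}).toReal * (1 + log2 N / 2) := by
    rw [Measure.restrict_singleton, integral_smul_measure, integral_dirac, smul_eq_mul]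
    have : g 1 = 1 + log2 N / 2 := renyi_wvec_one N hN
    rw [this]
  have hIntIoi : IntegrableOn g (Set.Ioi 1) μ := by
    apply Integrable.mono h2 (hgm.aestronglyMeasurable)
    rw [ae_restrict_iff' measurableSet_Ioi]
    apply ae_of_all
    intro α hα
    obtain ⟨hg0, hgle⟩ := renyi_wvec_gt N hN hα
    rw [Real.norm_eq_abs, Real.norm_eq_abs, abs_of_nonneg hg0]
    exact le_trans hgle (le_abs_self _)
  have hIoi_le : ∫ α in Set.Ioi 1, g α ∂μ ≤ ∫ α in Set.Ioi 1, aRatio' α ∂μ :=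
    setIntegral_mono_on hIntIoi h2 measurableSet_Ioi (fun α hα => (renyi_wvec_gt N hN hα).2)
  have hsets : Set.Iio (1:ℝ≥0∞) ∪ {1} ∪ Set.Ioi 1 = Set.univ := by
    ext α
    simp only [Set.mem_union, Set.mem_Iio, Set.mem_singleton_iff, Set.mem_Ioi, Set.mem_univ,
      iff_true]
    rcases lt_trichotomy α 1 with h | h | h
    · exact Or.inl (Or.inl h)
    · exact Or.inl (Or.inr h)
    · exact Or.inr h
  have hd1 : Disjoint (Set.Iio (1:ℝ≥0∞)) {1} := by
    rw [Set.disjoint_left]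
    intro a ha hmem
    rw [Set.mem_singleton_iff] at hmem
    exact absurd hmem (ne_of_lt ha)
  have hd2 : Disjoint (Set.Iio (1:ℝ≥0∞) ∪ {1}) (Set.Ioi 1) := by
    rw [Set.disjoint_left]
    intro a ha hmem
    rw [Set.mem_Ioi] at hmem
    rcases ha with h | h
    · exact absurd (lt_trans h hmem) (lt_irrefl a)
    · rw [Set.mem_singleton_iff] at h
      rw [h] at hmem
      exact absurd hmem (lt_irrefl 1)
  have hsplit : ∫ α, g α ∂μ
      = (∫ α in Set.Iio 1, g α ∂μ) + (∫ α in Set.Ioi 1, g α ∂μ)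
        + (∫ α in {1}, g α ∂μ) := by
    rw [← setIntegral_univ, ← hsets,
      setIntegral_union hd2 measurableSet_Ioi (hIntIio.union hIntSingle) hIntIoi,
      setIntegral_union hd1 (measurableSet_singleton 1) hIntIio hIntSingle]
    ring
  calc ∫ α, renyi α (wvec N) ∂μ = ∫ α, g α ∂μ := rfl
    _ = (∫ α in Set.Iio 1, g α ∂μ) + (∫ α in Set.Ioi 1, g α ∂μ) + (∫ α in {1}, g α ∂μ) := hsplit
    _ ≤ _ := by
        rw [hIio_eq, hSingle_eq]
        linarith [hIoi_le]

-- chunk 8: DCT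
lemma tendsto_integral_eN (μ : Measure ℝ≥0∞) [IsFiniteMeasure μ]
    (h1 : IntegrableOn aRatio (Set.Iio 1) μ) :
    Filter.Tendsto (fun n : ℕ => ∫ α in Set.Iio 1, eN (n+1) α ∂μ) Filter.atTop (nhds 0) := by
  have h0 : (0:ℝ) = ∫ α in Set.Iio (1:ℝ≥0∞), (0:ℝ) ∂μ := by simp
  rw [h0]
  apply tendsto_integral_of_dominated_convergence (bound := fun α => 1 + aRatio α)
  · intro n; exact (eN_measurable (n+1) (by omega)).aestronglyMeasurable
  · exact (integrable_const _).add h1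
  · intro n
    rw [ae_restrict_iff' measurableSet_Iio]
    apply ae_of_all
    intro α hα
    rw [Real.norm_eq_abs, abs_of_nonneg (eN_nonneg hα)]
    exact eN_le (by omega) hα
  · rw [ae_restrict_iff' measurableSet_Iio]
    apply ae_of_all
    intro α hα
    rw [Set.mem_Iio] at hα
    have ha := toReal_lt_one hα
    set a := α.toReal with hadef
    have hrp : Filter.Tendsto (fun n : ℕ => ((n+1:ℕ):ℝ) ^ (a - 1)) Filter.atTop (nhds 0) := by
      have hnat : Filter.Tendsto (fun n : ℕ => ((n+1:ℕ):ℝ)) Filter.atTop Filter.atTop :=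
        tendsto_natCast_atTop_atTop.comp (Filter.tendsto_add_atTop_nat 1)
      have hpow : Filter.Tendsto (fun x : ℝ => x ^ (a-1)) Filter.atTop (nhds 0) := by
        have := tendsto_rpow_neg_atTop (y := 1 - a) (by linarith)
        simpa [show -(1-a) = a-1 by ring] using this
      exact hpow.comp hnat
    have hcont : ContinuousAt (fun t : ℝ => (1 - a)⁻¹ * Real.logb 2 (1 + t)) 0 := by
      apply ContinuousAt.mul continuousAt_const
      have hlc : ContinuousAt (fun t : ℝ => Real.log (1 + t) / Real.log 2) 0 := by
        apply ContinuousAt.div_const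
        exact (Real.continuousAt_log (by norm_num)).comp
          ((continuous_const.add continuous_id).continuousAt)
      simpa [Real.logb] using hlc
    have hcomp := hcont.tendsto.comp hrp
    simp only [Function.comp, add_zero, Real.logb_one, mul_zero] at hcomp
    unfold eN log2
    exact hcomp


/-- Necessary conditions for concavity (positive-measure case): if
`x ↦ ‖x‖₁ · 2^(∫ H_α(x/‖x‖₁) dμ(α))` is concave on `(ℝ≥0)^d ∖ {0}` for every `d`, then
`μ((1,∞]) = 0`, `μ({1}) = 0` and `∫_{[0,1)} α/(1-α) dμ(α) ≤ 1`. -/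
theorem necessary_conditions_concave (μ : Measure ℝ≥0∞) (hfin : IsFiniteMeasure μ)
    (h1 : IntegrableOn aRatio (Set.Iio 1) μ)
    (h2 : IntegrableOn aRatio' (Set.Ioi 1) μ)
    (hconc : ∀ d : ℕ, ConcaveOn ℝ {x : Fin d → ℝ | (∀ i, 0 ≤ x i) ∧ x ≠ 0}
      (fun x => (∑ i, x i) * exp2 (∫ α, renyi α (fun i => x i / ∑ j, x j) ∂μ))) :
    μ (Set.Ioi 1) = 0 ∧ μ {1} = 0 ∧ ∫ α in Set.Iio (1 : ℝ≥0∞), aRatio α ∂μ ≤ 1 := by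
  haveI := hfin
  set A := ∫ α in Set.Iio (1:ℝ≥0∞), aRatio α ∂μ with hA
  set B := ∫ α in Set.Ioi (1:ℝ≥0∞), aRatio' α ∂μ with hB
  set E : ℕ → ℝ := fun n => ∫ α in Set.Iio 1, eN (n+1) α ∂μ with hE_def
  set p1 := (μ (Set.Iio 1)).toReal with hp1_def
  set p2 := (μ {1}).toReal with hp2_def
  set p3 := (μ (Set.Ioi 1)).toReal with hp3_def
  have hsets : Set.Iio (1:ℝ≥0∞) ∪ {1} ∪ Set.Ioi 1 = Set.univ := by
    ext α
    simp only [Set.mem_union, Set.mem_Iio, Set.mem_singleton_iff, Set.mem_Ioi, Set.mem_univ,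
      iff_true]
    rcases lt_trichotomy α 1 with h | h | h
    · exact Or.inl (Or.inl h)
    · exact Or.inl (Or.inr h)
    · exact Or.inr h
  have hd1 : Disjoint (Set.Iio (1:ℝ≥0∞)) {1} := by
    rw [Set.disjoint_left]
    intro a ha hmem
    rw [Set.mem_singleton_iff] at hmem
    exact absurd hmem (ne_of_lt ha)
  have hd2 : Disjoint (Set.Iio (1:ℝ≥0∞) ∪ {1}) (Set.Ioi 1) := by
    rw [Set.disjoint_left]
    intro a ha hmem
    rw [Set.mem_Ioi] at hmem
    rcases ha with h | h
    · exact absurd (lt_trans h hmem) (lt_irrefl a)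
    · rw [Set.mem_singleton_iff] at h
      rw [h] at hmem
      exact absurd hmem (lt_irrefl 1)
  have hmeasure : μ Set.univ = μ (Set.Iio 1) + μ {1} + μ (Set.Ioi 1) := by
    rw [← hsets, measure_union hd2 measurableSet_Ioi,
      measure_union hd1 (measurableSet_singleton 1)]
  have hm : (μ Set.univ).toReal = p1 + p2 + p3 := by
    rw [hmeasure, ENNReal.toReal_add (by
        exact ENNReal.add_ne_top.mpr ⟨measure_ne_top μ _, measure_ne_top μ _⟩)
      (measure_ne_top μ _),
      ENNReal.toReal_add (measure_ne_top μ _) (measure_ne_top μ _)]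
  have master : ∀ n : ℕ, (p2/2 + p3) * log2 ((n+1:ℕ):ℝ) ≤ 1 - A + E n + p2 + B := by
    intro n
    set L := log2 ((n+1:ℕ):ℝ) with hL_def
    have hk := key_ineq μ hconc (n+1) (by omega)
    have hu := integral_renyi_wvec_le μ h1 h2 (n+1) (by omega)
    rw [hm] at hk
    have hchain := le_trans hk hu
    have e1 : (p1 + p2 + p3) * L = p1*L + p2*L + p3*L := by ring
    have e2 : p2 * (1 + L/2) = p2 + p2*L/2 := by ring
    have e3 : (p2/2 + p3) * L = p2*L/2 + p3*L := by ring
    rw [e1, e2] at hchain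
    rw [e3]
    linarith
  have hE : Filter.Tendsto E Filter.atTop (nhds 0) := tendsto_integral_eN μ h1
  have hp2nn : 0 ≤ p2 := ENNReal.toReal_nonneg
  have hp3nn : 0 ≤ p3 := ENNReal.toReal_nonneg
  have hq : p2/2 + p3 ≤ 0 := by
    by_contra hq'
    push_neg at hq'
    have hlog : Filter.Tendsto (fun n : ℕ => log2 ((n+1:ℕ):ℝ)) Filter.atTop Filter.atTop := by
      unfold log2
      exact (Real.tendsto_logb_atTop one_lt_two).comp
        (tendsto_natCast_atTop_atTop.comp (Filter.tendsto_add_atTop_nat 1))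
    have hL : Filter.Tendsto (fun n : ℕ => (p2/2 + p3) * log2 ((n+1:ℕ):ℝ))
        Filter.atTop Filter.atTop := hlog.const_mul_atTop hq'
    have hev1 := hL.eventually_gt_atTop ((1 - A + p2 + B) + 1)
    have hev2 : ∀ᶠ n in Filter.atTop, E n < 1 :=
      hE.eventually_lt_const (by norm_num : (0:ℝ) < 1)
    obtain ⟨n, hn1, hn2⟩ := (hev1.and hev2).exists
    have := master n
    linarith
  have hp2 : p2 = 0 := by linarith
  have hp3 : p3 = 0 := by linarith
  have hμ3 : μ (Set.Ioi 1) = 0 := by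
    rcases (ENNReal.toReal_eq_zero_iff _).mp hp3 with h | h
    · exact h
    · exact absurd h (measure_ne_top μ _)
  have hμ2 : μ {1} = 0 := by
    rcases (ENNReal.toReal_eq_zero_iff _).mp hp2 with h | h
    · exact h
    · exact absurd h (measure_ne_top μ _)
  refine ⟨hμ3, hμ2, ?_⟩
  have hB0 : B = 0 := by
    rw [hB, Measure.restrict_eq_zero.mpr hμ3, integral_zero_measure]
  have hfinal : ∀ n, A - 1 ≤ E n := by
    intro n
    have := master n
    rw [hp2, hp3, hB0] at this
    simp only [zero_div, add_zero, zero_add, zero_mul] at this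
    linarith
  have : A - 1 ≤ 0 := ge_of_tendsto' hE hfinal
  linarith
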